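/- Let A be an m×n matrix and s ∈ ℕ. If inf over nonzero h ∈ ker(A) of ‖h‖₁/‖h‖₂ > 2√s, then A satisfies the (s,1) null space property: for every nonzero h ∈ ker(A) and every index set T with |T| ≤ s, ‖h_T‖₁ < ‖h_{Tᶜ}‖₁. -/

import Mathlib

open Finset Real

theorem stmt_19 (m n s : ℕ) (A : Matrix (Fin m) (Fin n) ℝ)
    (hinf : ∀ h : Fin n → ℝ, h ≠ 0 → A.mulVec h = 0 →
      (∑ i, |h i|) / Real.sqrt (∑ i, (h i) ^ 2) > 2 * Real.sqrt s) :
    ∀ h : Fin n → ℝ, h ≠ 0 → A.mulVec h = 0 →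
      ∀ T : Finset (Fin n), T.card ≤ s →
        (∑ i ∈ T, |h i|) < ∑ i ∈ Tᶜ, |h i| := by
  intro h hne hker T hT
  have hsqpos : 0 < ∑ i, (h i) ^ 2 := by
    obtain ⟨j, hj⟩ := Function.ne_iff.mp hne
    exact Finset.sum_pos' (fun i _ => sq_nonneg _)
      ⟨j, Finset.mem_univ j, by simpa using pow_pos (abs_pos.mpr hj) 2 |>.trans_le (by rw [sq_abs]) ⟩
  set N2 := Real.sqrt (∑ i, (h i) ^ 2) with hN2
  have hN2pos : 0 < N2 := Real.sqrt_pos.mpr hsqpos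
  have hmain : 2 * Real.sqrt s * N2 < ∑ i, |h i| := by
    have := hinf h hne hker
    calc 2 * Real.sqrt s * N2 < (∑ i, |h i|) / N2 * N2 := by
          exact mul_lt_mul_of_pos_right this hN2pos
      _ = ∑ i, |h i| := div_mul_cancel₀ _ hN2pos.ne'
  -- Cauchy-Schwarz: (∑_T |h i|)^2 ≤ s * ∑ h^2
  have hcs : (∑ i ∈ T, |h i|) ^ 2 ≤ (s : ℝ) * ∑ i, (h i) ^ 2 := by
    have h1 : (∑ i ∈ T, |h i|) ^ 2 ≤ (T.card : ℝ) * ∑ i ∈ T, |h i| ^ 2 :=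
      sq_sum_le_card_mul_sum_sq
    have h2 : ∑ i ∈ T, |h i| ^ 2 ≤ ∑ i, (h i) ^ 2 := by
      have : ∀ i ∈ T, |h i| ^ 2 = (h i) ^ 2 := fun i _ => sq_abs _
      rw [Finset.sum_congr rfl this]
      exact Finset.sum_le_sum_of_subset_of_nonneg (Finset.subset_univ T)
        (fun i _ _ => sq_nonneg _)
    calc (∑ i ∈ T, |h i|) ^ 2 ≤ (T.card : ℝ) * ∑ i ∈ T, |h i| ^ 2 := h1
      _ ≤ (s : ℝ) * ∑ i, (h i) ^ 2 := by
          apply mul_le_mul (by exact_mod_cast hT) h2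
            (Finset.sum_nonneg fun i _ => sq_nonneg _) (by positivity)
  have hT2 : ∑ i ∈ T, |h i| ≤ Real.sqrt s * N2 := by
    have : Real.sqrt ((∑ i ∈ T, |h i|) ^ 2) ≤ Real.sqrt ((s : ℝ) * ∑ i, (h i) ^ 2) :=
      Real.sqrt_le_sqrt hcs
    rwa [Real.sqrt_sq (Finset.sum_nonneg fun i _ => abs_nonneg _),
      Real.sqrt_mul (Nat.cast_nonneg s)] at this
  have hsplit : (∑ i, |h i|) = (∑ i ∈ T, |h i|) + ∑ i ∈ Tᶜ, |h i| :=
    (Finset.sum_add_sum_compl T _).symm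
  nlinarith [Real.sqrt_nonneg (s : ℝ), hT2, hmain]
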